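/- arXiv:2604.24749 — 3 statements merged into one kernel-verified Lean document; each statement's English description precedes it below -/
import Mathlib

section
/- Let k ≥ 2 and n ≥ 1 be integers and let W ⊆ [k]^n be a nonempty finite class. For all integers ℓ ≥ 1 and s ≥ d^ℓ_DS(W), the set of monomials M^ℓ_s(W) spans the real vector space V_W of all functions from W to ℝ. -/
open scoped Classical

section Defs

variable {X Y : Type*}

/-- `f` and `g` are `i`-neighbors: they differ at coordinate `i` and agree elsewhere. -/
def IsNeighbor {n : ℕ} (i : Fin n) (f g : Fin n → Y) : Prop :=
  f i ≠ g i ∧ ∀ j : Fin n, j ≠ i → f j = g j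

/-- The restriction `H|_S` of a hypothesis class to a sequence `S`. -/
def restrictClass (H : Set (X → Y)) {d : ℕ} (S : Fin d → X) : Set (Fin d → Y) :=
  (fun h i => h (S i)) '' H

/-- A class `G ⊆ Y^d` is ℓ-DS shattered (as a pattern class). -/
def DSShattered {d : ℕ} (G : Set (Fin d → Y)) (ℓ : ℕ) : Prop :=
  ∃ F : Finset (Fin d → Y), F.Nonempty ∧ ↑F ⊆ G ∧
    ∀ f ∈ F, ∀ i : Fin d, ℓ ≤ {g : Fin d → Y | g ∈ F ∧ IsNeighbor i f g}.ncard

/-- `H` ℓ-DS shatters the sequence `S`. -/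
def DSShatters (H : Set (X → Y)) (ℓ : ℕ) {d : ℕ} (S : Fin d → X) : Prop :=
  DSShattered (restrictClass H S) ℓ

/-- The ℓ-DS dimension of `H` equals `d`. -/
def DSDimEq (H : Set (X → Y)) (ℓ d : ℕ) : Prop :=
  (∃ S : Fin d → X, DSShatters H ℓ S) ∧
    ∀ d' : ℕ, (∃ S : Fin d' → X, DSShatters H ℓ S) → d' ≤ d

/-- Restriction of `w` to the coordinates other than `i`. -/
def deleteCoord {n : ℕ} (i : Fin n) (w : Fin n → Y) : {j : Fin n // j ≠ i} → Y :=
  fun j => w j.1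

/-- The edge `e_{i,a}` of the one-inclusion graph of `W`. -/
noncomputable def edgeFinset {n : ℕ} (W : Finset (Fin n → Y)) (i : Fin n)
    (a : {j : Fin n // j ≠ i} → Y) : Finset (Fin n → Y) :=
  W.filter fun w => deleteCoord i w = a

/-- The set `T_i` of behaviors of `W` on coordinates other than `i`. -/
noncomputable def behaviors {n : ℕ} (W : Finset (Fin n → Y)) (i : Fin n) :
    Finset ({j : Fin n // j ≠ i} → Y) :=
  W.image (deleteCoord i)

/-- The ℓ-density `dens^ℓ(W) = (1/|W|) Σ_{e ∈ E} (|e| − ℓ)₊` of the one-inclusion graph. -/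
noncomputable def dens {n : ℕ} (W : Finset (Fin n → Y)) (ℓ : ℕ) : ℝ :=
  ((∑ i : Fin n, ∑ a ∈ behaviors W i, ((edgeFinset W i a).card - ℓ) : ℕ) : ℝ) / (W.card : ℝ)

/-- The maximum ℓ-density function `μ^ℓ_H(n)`. -/
noncomputable def maxDensityFn (H : Set (X → Y)) (ℓ n : ℕ) : ℝ :=
  sSup {r : ℝ | ∃ (S : Fin n → X) (F : Finset (Fin n → Y)),
    F.Nonempty ∧ ↑F ⊆ restrictClass H S ∧ r = dens F ℓ}

end Defs

section Monomials

/-- The monomial function `w ↦ w_1^{α_1} ⋯ w_n^{α_n}` on `W`, where the label `w_i ∈ Fin k`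
is viewed as the integer `(w_i : ℕ) + 1 ∈ {1, …, k}`. -/
noncomputable def monomialFn {n k : ℕ} (W : Finset (Fin n → Fin k)) (α : Fin n → ℕ) :
    (↑W : Set (Fin n → Fin k)) → ℝ :=
  fun w => ∏ i : Fin n, (((w.1 i : ℕ) : ℝ) + 1) ^ (α i)

/-- The set `M^ℓ_s(W)` of monomials with exponents in `{0, …, k−1}` and at most `s`
coordinates of exponent `≥ ℓ`, viewed inside `V_W = (W → ℝ)`. -/
def monomialSet {n k : ℕ} (W : Finset (Fin n → Fin k)) (ℓ s : ℕ) :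
    Set ((↑W : Set (Fin n → Fin k)) → ℝ) :=
  { f | ∃ α : Fin n → ℕ, (∀ i, α i ≤ k - 1) ∧
      {i : Fin n | ℓ ≤ α i}.ncard ≤ s ∧ f = monomialFn W α }

end Monomials

namespace SpanningLemmaAux

noncomputable def nodeV {k : ℕ} (b : Fin k) : ℝ := ((b : ℕ) : ℝ) + 1

lemma nodeV_inj {k : ℕ} : Function.Injective (nodeV (k := k)) := by
  intro a b h
  have : ((a : ℕ) : ℝ) = ((b : ℕ) : ℝ) := by simpa [nodeV] using h
  exact Fin.ext (by exact_mod_cast this)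

lemma vand_zero {k : ℕ} (φ : Fin k → ℝ)
    (h : ∀ j : Fin k, ∑ b, φ b * nodeV b ^ (j : ℕ) = 0) : φ = 0 := by
  have hdet : (Matrix.vandermonde (nodeV (k := k))).det ≠ 0 :=
    Matrix.det_vandermonde_ne_zero_iff.mpr nodeV_inj
  apply Matrix.eq_zero_of_vecMul_eq_zero hdet
  funext j
  simpa [Matrix.vecMul, Matrix.vandermonde, dotProduct] using h j

lemma support_large {k ℓ : ℕ} (hℓk : ℓ ≤ k) (φ : Fin k → ℝ) (hφ : φ ≠ 0)
    (h : ∀ j : ℕ, j < ℓ → ∑ b, φ b * nodeV b ^ j = 0) :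
    ℓ < (Finset.univ.filter fun b => φ b ≠ 0).card := by
  by_contra hcon
  push_neg at hcon
  set T := Finset.univ.filter fun b => φ b ≠ 0 with hT
  have hTmem : ∀ b : Fin k, b ∈ T ↔ φ b ≠ 0 := by
    intro b; simp [hT]
  have hTne : T.Nonempty := by
    rcases Function.ne_iff.mp hφ with ⟨b, hb⟩
    exact ⟨b, (hTmem b).mpr (by simpa using hb)⟩
  have hℓpos : 0 < ℓ := by
    rcases Nat.eq_zero_or_pos ℓ with rfl | hp
    · have := Finset.card_pos.mpr hTne
      omega
    · exact hp
  have hinj : Set.InjOn (nodeV (k := k)) T := Function.Injective.injOn nodeV_inj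
  set p := Lagrange.interpolate T nodeV φ with hp
  have hnd : p.natDegree < ℓ := by
    rcases eq_or_ne p 0 with h0 | h0
    · simpa [h0] using hℓpos
    · have hlt := Lagrange.degree_interpolate_lt φ hinj
      rw [← hp] at hlt
      have h2 : p.degree < (ℓ : ℕ) := lt_of_lt_of_le hlt (by exact_mod_cast hcon)
      exact (Polynomial.natDegree_lt_iff_degree_lt h0).mpr h2
  have key : ∑ b, φ b * Polynomial.eval (nodeV b) p = 0 := by
    have heval : ∀ b : Fin k, Polynomial.eval (nodeV b) p
        = ∑ j ∈ Finset.range ℓ, p.coeff j * nodeV b ^ j := fun b =>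
      Polynomial.eval_eq_sum_range' hnd _
    calc ∑ b, φ b * Polynomial.eval (nodeV b) p
        = ∑ j ∈ Finset.range ℓ, p.coeff j * ∑ b, φ b * nodeV b ^ j := by
          simp_rw [heval, Finset.mul_sum]
          rw [Finset.sum_comm]
          exact Finset.sum_congr rfl fun j _ =>
            Finset.sum_congr rfl fun b _ => by ring
      _ = 0 := by
          refine Finset.sum_eq_zero fun j hj => ?_
          rw [h j (Finset.mem_range.mp hj), mul_zero]
  have key2 : ∑ b, φ b * Polynomial.eval (nodeV b) p = ∑ b ∈ T, φ b ^ 2 := by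
    rw [← Finset.sum_subset (Finset.subset_univ T)
      (fun b _ hb => by
        have : φ b = 0 := by
          by_contra hb'
          exact hb ((hTmem b).mpr hb')
        simp [this])]
    refine Finset.sum_congr rfl fun b hb => ?_
    rw [hp, Lagrange.eval_interpolate_at_node φ hinj hb]
    ring
  have hpos : 0 < ∑ b ∈ T, φ b ^ 2 := by
    refine Finset.sum_pos (fun b hb => ?_) hTne
    have : φ b ≠ 0 := (hTmem b).mp hb
    positivity
  rw [key2] at key
  linarith

lemma sum_insertNth {k n : ℕ} (i : Fin (n + 1)) (G : (Fin (n + 1) → Fin k) → ℝ) :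
    ∑ x, G x = ∑ b : Fin k, ∑ y : Fin n → Fin k,
      G (Fin.insertNth (α := fun _ => Fin k) i b y) := by
  rw [← Equiv.sum_comp (Fin.insertNthEquiv (fun _ => Fin k) i) G, Fintype.sum_prod_type]
  rfl

lemma prod_insertNth {k n : ℕ} (i : Fin (n + 1)) (b : Fin k) (y : Fin n → Fin k)
    (α : Fin (n + 1) → ℕ) :
    ∏ r, nodeV (Fin.insertNth (α := fun _ => Fin k) i b y r) ^ (α r)
      = nodeV b ^ (α i) * ∏ r : Fin n, nodeV (y r) ^ (α (i.succAbove r)) := by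
  rw [Fin.prod_univ_succAbove
    (fun r => nodeV (Fin.insertNth (α := fun _ => Fin k) i b y r) ^ (α r)) i]
  simp

lemma full_vand_zero {k : ℕ} (hk : 1 ≤ k) : ∀ (n : ℕ) (g : (Fin n → Fin k) → ℝ),
    (∀ α : Fin n → ℕ, (∀ i, α i ≤ k - 1) →
      ∑ x, g x * ∏ i, nodeV (x i) ^ (α i) = 0) → g = 0 := by
  intro n
  induction n with
  | zero =>
    intro g h
    funext x
    have h0 := h (fun _ => 0) (fun i => Nat.zero_le _)
    rw [Fintype.sum_unique] at h0
    have hx : x = default := Subsingleton.elim _ _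
    rw [hx]
    simpa using h0
  | succ n ih =>
    intro g h
    set i : Fin (n + 1) := 0 with hi
    have hslice : ∀ b : Fin k, (fun y : Fin n → Fin k =>
        g (Fin.insertNth (α := fun _ => Fin k) i b y)) = 0 := by
      intro b
      apply ih
      intro α' hα'
      have hΦ : (fun b : Fin k => ∑ y : Fin n → Fin k,
          g (Fin.insertNth (α := fun _ => Fin k) i b y) * ∏ r, nodeV (y r) ^ (α' r)) = 0 := by
        apply vand_zero
        intro j
        have hb := h (Fin.insertNth (α := fun _ => ℕ) i (j : ℕ) α') ?_
        · rw [sum_insertNth i] at hb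
          rw [← hb]
          refine (Finset.sum_congr rfl fun b _ => ?_)
          rw [Finset.sum_mul]
          refine Finset.sum_congr rfl fun y _ => ?_
          rw [prod_insertNth]
          simp only [Fin.insertNth_apply_same, Fin.insertNth_apply_succAbove]
          ring
        · intro r
          rcases eq_or_ne r i with rfl | hne
          · simp only [Fin.insertNth_apply_same]
            omega
          · obtain ⟨d, rfl⟩ := Fin.exists_succAbove_eq hne
            simpa only [Fin.insertNth_apply_succAbove] using hα' d
      exact congrFun hΦ b
    funext x
    have hx : x = Fin.insertNth (α := fun _ => Fin k) i (x i) (fun d => x (i.succAbove d)) := by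
      exact (Fin.insertNth_self_removeNth i x).symm
    rw [hx]
    exact congrFun (hslice (x i)) _

lemma mainL {k ℓ : ℕ} (hk : 1 ≤ k) (hℓ : 1 ≤ ℓ) :
    ∀ (n s : ℕ) (g : (Fin n → Fin k) → ℝ), g ≠ 0 →
    (∀ α : Fin n → ℕ, (∀ i, α i ≤ k - 1) → {i | ℓ ≤ α i}.ncard ≤ s →
        ∑ x, g x * ∏ i, nodeV (x i) ^ (α i) = 0) →
    ∃ S : Fin (s + 1) → Fin n, ∃ F : Finset (Fin (s + 1) → Fin k), F.Nonempty ∧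
      (∀ f ∈ F, ∃ x, g x ≠ 0 ∧ ∀ r, f r = x (S r)) ∧
      (∀ f ∈ F, ∀ r : Fin (s + 1),
        ℓ ≤ {h : Fin (s + 1) → Fin k | h ∈ F ∧ IsNeighbor r f h}.ncard) := by
  intro n
  induction n with
  | zero =>
    intro s g hg horth
    exfalso
    apply hg
    apply full_vand_zero hk 0 g
    intro α hα
    refine horth α hα ?_
    have : {i : Fin 0 | ℓ ≤ α i} = ∅ := by
      ext i; exact absurd i.isLt (by omega)
    simp [this]
  | succ n ih =>
    intro s g hg horth
    by_cases hℓk : k ≤ ℓ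
    · exfalso
      apply hg
      apply full_vand_zero hk (n+1) g
      intro α hα
      refine horth α hα ?_
      have : {i | ℓ ≤ α i} = ∅ := by
        ext i
        simp only [Set.mem_setOf_eq, Set.mem_empty_iff_false, iff_false, not_le]
        have := hα i
        omega
      simp [this]
    push_neg at hℓk
    by_cases hns : n + 1 ≤ s
    · exfalso
      apply hg
      apply full_vand_zero hk (n+1) g
      intro α hα
      refine horth α hα ?_
      calc {i | ℓ ≤ α i}.ncard ≤ (Set.univ : Set (Fin (n+1))).ncard :=
            Set.ncard_le_ncard (Set.subset_univ _) Set.finite_univ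
        _ ≤ s := by simp [Set.ncard_univ]; omega
    push_neg at hns
    by_cases hA : ∃ i : Fin (n + 1), ∃ j : ℕ, j < ℓ ∧ ∃ y : Fin n → Fin k,
        ∑ b, nodeV b ^ j * g (Fin.insertNth (α := fun _ => Fin k) i b y) ≠ 0
    · -- Case A: reduce dimension
      obtain ⟨i, j, hj, y₀, hy₀⟩ := hA
      set g₂ : (Fin n → Fin k) → ℝ :=
        fun y => ∑ b, nodeV b ^ j * g (Fin.insertNth (α := fun _ => Fin k) i b y) with hg₂
      have hg₂0 : g₂ ≠ 0 := fun hzero => hy₀ (by simpa using congrFun hzero y₀)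
      have horth₂ : ∀ α' : Fin n → ℕ, (∀ d, α' d ≤ k - 1) → {d | ℓ ≤ α' d}.ncard ≤ s →
          ∑ y, g₂ y * ∏ d, nodeV (y d) ^ (α' d) = 0 := by
        intro α' hb hc
        have hα := horth (Fin.insertNth (α := fun _ => ℕ) i j α') ?_ ?_
        · rw [sum_insertNth i] at hα
          rw [← hα]
          rw [Finset.sum_comm]
          refine Finset.sum_congr rfl fun y _ => ?_
          rw [hg₂, Finset.sum_mul]
          refine Finset.sum_congr rfl fun b _ => ?_
          rw [prod_insertNth]
          simp only [Fin.insertNth_apply_same, Fin.insertNth_apply_succAbove]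
          ring
        · intro r
          rcases eq_or_ne r i with rfl | hne
          · simp only [Fin.insertNth_apply_same]; omega
          · obtain ⟨d, rfl⟩ := Fin.exists_succAbove_eq hne
            simpa only [Fin.insertNth_apply_succAbove] using hb d
        · have hset : {r | ℓ ≤ (Fin.insertNth (α := fun _ => ℕ) i j α') r}
              = i.succAbove '' {d | ℓ ≤ α' d} := by
            ext r
            constructor
            · intro hr
              rcases eq_or_ne r i with rfl | hne
              · exfalso
                simp only [Set.mem_setOf_eq, Fin.insertNth_apply_same] at hr
                omega
              · obtain ⟨d, rfl⟩ := Fin.exists_succAbove_eq hne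
                refine ⟨d, ?_, rfl⟩
                simpa only [Set.mem_setOf_eq, Fin.insertNth_apply_succAbove] using hr
            · rintro ⟨d, hd, rfl⟩
              simpa only [Set.mem_setOf_eq, Fin.insertNth_apply_succAbove] using hd
          rw [hset, Set.ncard_image_of_injective _ (Fin.succAbove_right_injective)]
          exact hc
      obtain ⟨S', F, hFne, hFsub, hFnb⟩ := ih s g₂ hg₂0 horth₂
      refine ⟨fun r => i.succAbove (S' r), F, hFne, ?_, hFnb⟩
      intro f hf
      obtain ⟨y, hy, hfy⟩ := hFsub f hf
      have hex : ∃ b, g (Fin.insertNth (α := fun _ => Fin k) i b y) ≠ 0 := by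
        by_contra hall
        push_neg at hall
        apply hy
        rw [hg₂]
        simp [hall]
      obtain ⟨b, hbne⟩ := hex
      exact ⟨Fin.insertNth (α := fun _ => Fin k) i b y, hbne,
        fun r => by rw [hfy r, Fin.insertNth_apply_succAbove]⟩
    · -- Case B
      push_neg at hA
      have hSle : s + 1 ≤ n + 1 := by omega
      set S : Fin (s + 1) → Fin (n + 1) := Fin.castLE hSle with hS
      have hSinj : Function.Injective S := Fin.castLE_injective hSle
      obtain ⟨x₀, hx₀⟩ := Function.ne_iff.mp hg
      refine ⟨S, (Finset.univ.filter fun x => g x ≠ 0).image (fun x r => x (S r)), ?_, ?_, ?_⟩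
      · exact ⟨(fun r => x₀ (S r)), Finset.mem_image.mpr ⟨x₀, by simpa using hx₀, rfl⟩⟩
      · intro f hf
        obtain ⟨x, hx, hxf⟩ := Finset.mem_image.mp hf
        exact ⟨x, by simpa using hx, fun r => (congrFun hxf r).symm⟩
      · intro f hf r
        obtain ⟨x, hx, hxf⟩ := Finset.mem_image.mp hf
        have hgx : g x ≠ 0 := by simpa using hx
        set i : Fin (n + 1) := S r with hir
        set y : Fin n → Fin k := fun d => x (i.succAbove d) with hy
        set φ : Fin k → ℝ := fun b => g (Fin.insertNth (α := fun _ => Fin k) i b y) with hφ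
        have hφx : φ (x i) = g x := by
          show g (Fin.insertNth (α := fun _ => Fin k) i (x i) y) = g x
          congr 1
          exact Fin.insertNth_self_removeNth i x
        have hφ0 : φ ≠ 0 := fun hzero => hgx (by rw [← hφx]; rw [hzero]; rfl)
        have hlow : ∀ j : ℕ, j < ℓ → ∑ b, φ b * nodeV b ^ j = 0 := by
          intro j hj
          have := hA i j hj y
          rw [← this]
          exact Finset.sum_congr rfl fun b _ => by rw [hφ]; ring
        have hcard := support_large (le_of_lt hℓk) φ hφ0 hlow
        set T := Finset.univ.filter fun b => φ b ≠ 0 with hT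
        have hxiT : x i ∈ T := by
          rw [hT]
          simp only [Finset.mem_filter, Finset.mem_univ, true_and]
          rw [hφx]; exact hgx
        set B := T.erase (x i) with hB
        have hBcard : ℓ ≤ B.card := by
          rw [hB, Finset.card_erase_of_mem hxiT]
          omega
        have hmem : ∀ b ∈ B, Function.update f r b ∈
            (Finset.univ.filter fun x => g x ≠ 0).image (fun x r => x (S r)) := by
          intro b hb
          have hφb : φ b ≠ 0 := by
            have := Finset.mem_of_mem_erase (hB ▸ hb)
            rw [hT] at this
            simpa using this
          refine Finset.mem_image.mpr ⟨Fin.insertNth (α := fun _ => Fin k) i b y,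
            by simpa using hφb, ?_⟩
          funext r'
          rcases eq_or_ne r' r with rfl | hne
          · simp only [Function.update_self]
            exact Fin.insertNth_apply_same (α := fun _ => Fin k) i b y
          · have hSne : S r' ≠ i := fun hcon => hne (hSinj (hir ▸ hcon))
            obtain ⟨d, hd⟩ := Fin.exists_succAbove_eq hSne
            have hfr' : f r' = x (S r') := (congrFun hxf r').symm
            rw [Function.update_of_ne hne, hfr', ← hd,
              Fin.insertNth_apply_succAbove]
        have hnbr : ∀ b ∈ B, IsNeighbor r f (Function.update f r b) := by
          intro b hb
          constructor
          · rw [Function.update_self]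
            have hbne : b ≠ x i := Finset.ne_of_mem_erase (hB ▸ hb)
            have : f r = x i := by rw [hir]; exact (congrFun hxf r).symm
            rw [this]
            exact fun hcon => hbne hcon.symm
          · intro j hj
            rw [Function.update_of_ne hj]
        have hinj2 : Set.InjOn (fun b => Function.update f r b) ↑B := by
          intro a _ b _ hab
          have := congrFun hab r
          simpa using this
        calc (ℓ : ℕ) ≤ B.card := hBcard
          _ = (↑B : Set (Fin k)).ncard := (Set.ncard_coe_finset B).symm
          _ = ((fun b => Function.update f r b) '' ↑B).ncard :=
              (Set.ncard_image_of_injOn hinj2).symm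
          _ ≤ _ := by
              apply Set.ncard_le_ncard
              · rintro h ⟨b, hb, rfl⟩
                exact ⟨hmem b hb, hnbr b hb⟩
              · apply Set.Finite.subset (Finset.finite_toSet _)
                intro h hh
                exact hh.1

end SpanningLemmaAux

open SpanningLemmaAux


/-- Spanning Lemma, Hanneke et al. 2026. For a nonempty finite
`W ⊆ [k]^n` and integers `ℓ ≥ 1`, `s ≥ d^ℓ_DS(W)`, the monomial set `M^ℓ_s(W)`
spans the vector space `V_W` of all functions `W → ℝ`. -/
theorem monomialSet_spans (k n ℓ s d : ℕ) (hk : 2 ≤ k) (hn : 1 ≤ n) (hℓ : 1 ≤ ℓ)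
    (W : Finset (Fin n → Fin k)) (hW : W.Nonempty)
    (hdim : DSDimEq (↑W : Set (Fin n → Fin k)) ℓ d) (hs : d ≤ s) :
    Submodule.span ℝ (monomialSet W ℓ s) = ⊤ := by
  by_contra hne
  have hlt : Submodule.span ℝ (monomialSet W ℓ s) < ⊤ := lt_top_iff_ne_top.mpr hne
  obtain ⟨φ, hφ0, hφmap⟩ :=
    Submodule.exists_dual_map_eq_bot_of_lt_top hlt inferInstance
  have hφker : ∀ v ∈ Submodule.span ℝ (monomialSet W ℓ s), φ v = 0 := by
    intro v hv
    have hmem : φ v ∈ (Submodule.span ℝ (monomialSet W ℓ s)).map φ := ⟨v, hv, rfl⟩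
    rw [hφmap] at hmem
    simpa using hmem
  set g : (Fin n → Fin k) → ℝ := fun x =>
    if hx : x ∈ W then
      φ (Pi.single (⟨x, Finset.mem_coe.mpr hx⟩ : (↑W : Set (Fin n → Fin k))) 1)
    else 0 with hgdef
  have hrep : ∀ v : (↑W : Set (Fin n → Fin k)) → ℝ,
      (∑ x ∈ W.attach, Pi.single (M := fun _ => ℝ)
        (⟨x.1, Finset.mem_coe.mpr x.2⟩ : (↑W : Set (Fin n → Fin k)))
        (v ⟨x.1, Finset.mem_coe.mpr x.2⟩)) = v := by
    intro v
    funext w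
    rw [Finset.sum_apply]
    have hw : (⟨w.1, w.2⟩ : {a // a ∈ W}) ∈ W.attach := Finset.mem_attach _ _
    rw [Finset.sum_eq_single_of_mem (⟨w.1, w.2⟩ : {a // a ∈ W}) hw ?_]
    · simp
    · intro x _ hxw
      apply Pi.single_eq_of_ne
      intro hcon
      exact hxw (Subtype.ext (congrArg Subtype.val hcon).symm)
  have hsingle : ∀ w : (↑W : Set (Fin n → Fin k)), φ (Pi.single w 1) = g w.1 := by
    intro w
    simp only [hgdef]
    rw [dif_pos (Finset.mem_coe.mp w.2)]
  have hg0 : g ≠ 0 := by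
    intro hzero
    apply hφ0
    refine LinearMap.ext fun v => ?_
    show φ v = 0
    rw [← hrep v, map_sum]
    refine Finset.sum_eq_zero fun x _ => ?_
    have h1 : Pi.single (M := fun _ => ℝ)
        (⟨x.1, Finset.mem_coe.mpr x.2⟩ : (↑W : Set (Fin n → Fin k)))
        (v ⟨x.1, Finset.mem_coe.mpr x.2⟩)
        = (v ⟨x.1, Finset.mem_coe.mpr x.2⟩) • Pi.single (M := fun _ => ℝ)
          (⟨x.1, Finset.mem_coe.mpr x.2⟩ : (↑W : Set (Fin n → Fin k))) (1 : ℝ) := by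
      rw [← Pi.single_smul, smul_eq_mul, mul_one]
    rw [h1, map_smul, hsingle ⟨x.1, Finset.mem_coe.mpr x.2⟩, smul_eq_mul]
    rw [congrFun hzero x.1]
    simp
  have hmono : ∀ α : Fin n → ℕ, (∀ i, α i ≤ k - 1) → {i | ℓ ≤ α i}.ncard ≤ s →
      φ (monomialFn W α) = 0 := fun α h1 h2 =>
    hφker _ (Submodule.subset_span ⟨α, h1, h2, rfl⟩)
  have horth : ∀ α : Fin n → ℕ, (∀ i, α i ≤ k - 1) → {i | ℓ ≤ α i}.ncard ≤ s →
      ∑ x, g x * ∏ i, nodeV (x i) ^ (α i) = 0 := by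
    intro α h1 h2
    have e1 : ∑ x, g x * ∏ i, nodeV (x i) ^ α i
        = ∑ x ∈ W, g x * ∏ i, nodeV (x i) ^ α i :=
      (Finset.sum_subset (Finset.subset_univ W) (fun x _ hx => by
        simp only [hgdef]
        rw [dif_neg hx]
        ring)).symm
    rw [e1, ← Finset.sum_attach W (fun x => g x * ∏ i, nodeV (x i) ^ α i)]
    have e2 : ∀ x ∈ W.attach, g x.1 * ∏ i, nodeV (x.1 i) ^ α i
        = φ ((∏ i, nodeV (x.1 i) ^ α i) • Pi.single (M := fun _ => ℝ)
            (⟨x.1, Finset.mem_coe.mpr x.2⟩ : (↑W : Set (Fin n → Fin k))) (1 : ℝ)) := by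
      intro x _
      rw [map_smul, smul_eq_mul, hsingle ⟨x.1, Finset.mem_coe.mpr x.2⟩]
      ring
    rw [Finset.sum_congr rfl e2, ← map_sum]
    have e3 : (∑ x ∈ W.attach, (∏ i, nodeV (x.1 i) ^ α i) • Pi.single (M := fun _ => ℝ)
        (⟨x.1, Finset.mem_coe.mpr x.2⟩ : (↑W : Set (Fin n → Fin k))) (1 : ℝ))
        = monomialFn W α := by
      rw [← hrep (monomialFn W α)]
      refine Finset.sum_congr rfl fun x _ => ?_
      rw [← Pi.single_smul, smul_eq_mul, mul_one]
      rfl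
    rw [e3]
    exact hmono α h1 h2
  obtain ⟨S, F, hFne, hFsub, hFnb⟩ :=
    mainL (show 1 ≤ k by omega) hℓ n s g hg0 horth
  have hshat : DSShatters (↑W : Set (Fin n → Fin k)) ℓ S := by
    refine ⟨F, hFne, ?_, hFnb⟩
    intro f hf
    obtain ⟨x, hgx, hfx⟩ := hFsub f (Finset.mem_coe.mp hf)
    have hxW : x ∈ W := by
      by_contra hxW
      apply hgx
      simp only [hgdef]
      rw [dif_neg hxW]
    exact ⟨x, Finset.mem_coe.mpr hxW, funext fun r => (hfx r).symm⟩
  have hcon := hdim.2 (s + 1) ⟨S, hshat⟩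
  omega
end

section
/- Let k ≥ 2, n ≥ 1, ℓ ≥ 1, s ≥ 0 be integers, let W ⊆ [k]^n be a nonempty finite class, and let B ⊆ M^ℓ_s(W) be a linearly independent set of monomials in V_W. Fix a direction i ∈ [n], and let B^{<ℓ}_i be the set of monomials in B whose exponent α_i at coordinate i satisfies α_i < ℓ. Then |B^{<ℓ}_i| ≤ Σ_{a ∈ T_i} min(ℓ, |e_{i,a}|), where T_i = {w_{−i} : w ∈ W} and e_{i,a} = {w ∈ W : w_{−i} = a}. In particular, if B is a basis of V_W, then |B \ B^{<ℓ}_i| ≥ Σ_{a ∈ T_i} (|e_{i,a}| − ℓ)_+. -/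
open scoped Classical

open Module in
private lemma finrank_finsetSum_le' {ι V : Type*} [AddCommGroup V] [Module ℝ V]
    [FiniteDimensional ℝ V] (s : Finset ι) (U : ι → Submodule ℝ V) :
    finrank ℝ (∑ a ∈ s, U a : Submodule ℝ V) ≤ ∑ a ∈ s, finrank ℝ (U a) := by
  induction s using Finset.cons_induction with
  | empty => rw [Finset.sum_empty, Finset.sum_empty, Submodule.zero_eq_bot, finrank_bot]
  | cons a s ha ih =>
    rw [Finset.sum_cons, Finset.sum_cons]
    calc finrank ℝ (U a + ∑ b ∈ s, U b : Submodule ℝ V)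
        ≤ finrank ℝ (U a) + finrank ℝ (∑ b ∈ s, U b : Submodule ℝ V) := by
          rw [Submodule.add_eq_sup]
          exact Submodule.finrank_add_le_finrank_add_finrank _ _
      _ ≤ _ := by omega

set_option maxHeartbeats 1000000 in
open Module in
/-- For a linearly independent set `B ⊆ M^ℓ_s(W)` of monomials
(identified with their exponent vectors), the number of monomials in `B` whose exponent
at coordinate `i` is `< ℓ` is at most `Σ_{a ∈ T_i} min(ℓ, |e_{i,a}|)`; in particular,
if `B` is a basis of `V_W`, then `|B \ B^{<ℓ}_i| ≥ Σ_{a ∈ T_i} (|e_{i,a}| − ℓ)₊`. -/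
theorem basis_monomials_direction_count (k n ℓ s : ℕ) (hk : 2 ≤ k) (hn : 1 ≤ n)
    (hℓ : 1 ≤ ℓ) (W : Finset (Fin n → Fin k)) (hW : W.Nonempty)
    (B : Finset (Fin n → ℕ))
    (hBdeg : ∀ α ∈ B, ∀ i : Fin n, α i ≤ k - 1)
    (hBsupp : ∀ α ∈ B, {i : Fin n | ℓ ≤ α i}.ncard ≤ s)
    (hind : LinearIndependent ℝ (fun α : ↑B => monomialFn W ↑α))
    (i : Fin n) :
    (B.filter fun α => α i < ℓ).card ≤ ∑ a ∈ behaviors W i, min ℓ (edgeFinset W i a).card ∧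
    (Submodule.span ℝ (Set.range (fun α : ↑B => monomialFn W ↑α)) = ⊤ →
      ∑ a ∈ behaviors W i, ((edgeFinset W i a).card - ℓ) ≤
        (B.filter fun α => ¬ α i < ℓ).card) := by
  classical
  let g : ({j : Fin n // j ≠ i} → Fin k) → ℕ → ((↑W : Set (Fin n → Fin k)) → ℝ) := fun a j w =>
    if deleteCoord i w.1 = a then (((w.1 i : ℕ) : ℝ) + 1) ^ j else 0
  let delta : (Fin n → Fin k) → ((↑W : Set (Fin n → Fin k)) → ℝ) := fun w₀ w =>
    if w.1 = w₀ then 1 else 0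
  let U : ({j : Fin n // j ≠ i} → Fin k) →
      Submodule ℝ ((↑W : Set (Fin n → Fin k)) → ℝ) := fun a =>
    Submodule.span ℝ ↑((Finset.range ℓ).image (g a))
  let Us : Submodule ℝ ((↑W : Set (Fin n → Fin k)) → ℝ) := ∑ a ∈ behaviors W i, U a
  have hUle : ∀ a, finrank ℝ (U a) ≤ min ℓ (edgeFinset W i a).card := by
    intro a
    refine le_min ?_ ?_
    · exact (finrank_span_finset_le_card _).trans
        ((Finset.card_image_le).trans (by simp))
    · have hsub : U a ≤ Submodule.span ℝ ↑((edgeFinset W i a).image delta) := by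
        rw [Submodule.span_le]
        intro f hf
        simp only [Finset.coe_image, Set.mem_image, Finset.mem_coe, Finset.mem_range] at hf
        obtain ⟨j, hj, rfl⟩ := hf
        have hgeq : g a j = ∑ w₀ ∈ edgeFinset W i a,
            ((((w₀ i : ℕ) : ℝ) + 1) ^ j) • delta w₀ := by
          funext w
          rw [Finset.sum_apply]
          simp only [Pi.smul_apply, smul_eq_mul, delta, g, mul_ite, mul_one, mul_zero]
          rw [Finset.sum_ite_eq (edgeFinset W i a) w.1 (fun w₀ => (((w₀ i : ℕ) : ℝ) + 1) ^ j)]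
          have hmem : w.1 ∈ edgeFinset W i a ↔ deleteCoord i w.1 = a := by
            simp [edgeFinset, w.2]
          by_cases hc : deleteCoord i w.1 = a
          · rw [if_pos hc, if_pos (hmem.2 hc)]
          · rw [if_neg hc, if_neg (fun h => hc (hmem.1 h))]
        rw [hgeq]
        exact Submodule.sum_mem _ fun w₀ hw₀ => Submodule.smul_mem _ _
          (Submodule.subset_span (Finset.mem_coe.2 (Finset.mem_image_of_mem _ hw₀)))
      exact (Submodule.finrank_mono hsub).trans
        ((finrank_span_finset_le_card _).trans Finset.card_image_le)
  have hmem : ∀ α : Fin n → ℕ, α i < ℓ → monomialFn W α ∈ Us := by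
    intro α hαi
    have heq : monomialFn W α = ∑ a ∈ behaviors W i,
        (∏ j : {j : Fin n // j ≠ i}, (((a j : ℕ) : ℝ) + 1) ^ (α j.1)) • g a (α i) := by
      funext w
      rw [Finset.sum_apply]
      simp only [Pi.smul_apply, smul_eq_mul, g, mul_ite, mul_zero]
      rw [Finset.sum_ite_eq (behaviors W i) (deleteCoord i w.1)
        (fun a => (∏ j : {j : Fin n // j ≠ i}, (((a j : ℕ) : ℝ) + 1) ^ (α j.1)) *
          (((w.1 i : ℕ) : ℝ) + 1) ^ (α i))]
      have hb : deleteCoord i w.1 ∈ behaviors W i := by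
        simp only [behaviors, Finset.mem_image]
        exact ⟨w.1, Finset.mem_coe.1 w.2, rfl⟩
      rw [if_pos hb]
      have hsplit : ∏ j : Fin n, (((w.1 j : ℕ) : ℝ) + 1) ^ (α j) =
          (((w.1 i : ℕ) : ℝ) + 1) ^ (α i) *
          ∏ j : {j : Fin n // j ≠ i}, (((w.1 j.1 : ℕ) : ℝ) + 1) ^ (α j.1) := by
        rw [← Finset.prod_subtype (Finset.univ.erase i)
          (fun x => by simp [Finset.mem_erase]) (fun j => (((w.1 j : ℕ) : ℝ) + 1) ^ (α j))]
        exact (Finset.mul_prod_erase Finset.univ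
          (fun j => (((w.1 j : ℕ) : ℝ) + 1) ^ (α j)) (Finset.mem_univ i)).symm
      simp only [monomialFn, deleteCoord]
      rw [hsplit]; ring
    rw [heq]
    refine Submodule.sum_mem _ fun a ha => ?_
    have hle : U a ≤ Us := Finset.single_le_sum (f := U) (fun b _ => zero_le) ha
    exact Submodule.smul_mem _ _ (hle
      (Submodule.subset_span (Finset.mem_coe.2
        (Finset.mem_image_of_mem _ (Finset.mem_range.2 hαi)))))
  have hpart1 : (B.filter fun α => α i < ℓ).card ≤
      ∑ a ∈ behaviors W i, min ℓ (edgeFinset W i a).card := by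
    have hUs : finrank ℝ Us ≤ ∑ a ∈ behaviors W i, min ℓ (edgeFinset W i a).card :=
      (finrank_finsetSum_le' _ _).trans (Finset.sum_le_sum fun a _ => hUle a)
    set Bf := B.filter (fun α => α i < ℓ) with hBf
    let e : ↑Bf → ↑B := fun α => ⟨α.1, Finset.mem_of_mem_filter _ α.2⟩
    have he : Function.Injective e := by
      intro x y h
      have h' : (e x).1 = (e y).1 := congrArg Subtype.val h
      exact Subtype.ext h'
    have h1 : LinearIndependent ℝ ((fun α : ↑B => monomialFn W ↑α) ∘ e) := hind.comp e he
    let v : ↑Bf → Us := fun α => ⟨monomialFn W α.1, hmem α.1 (Finset.mem_filter.1 α.2).2⟩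
    have hv : LinearIndependent ℝ v := by
      apply LinearIndependent.of_comp Us.subtype
      exact h1
    have hcard := hv.fintype_card_le_finrank
    rw [Fintype.card_coe] at hcard
    exact hcard.trans hUs
  clear hmem hUle Us U delta g
  refine ⟨hpart1, fun hspan => ?_⟩
  have bb : Basis ↑B ℝ ((↑W : Set (Fin n → Fin k)) → ℝ) := Basis.mk hind (by rw [hspan])
  have hBcard : B.card = W.card := by
    have h1 := Module.finrank_eq_card_basis bb
    simp only [Fintype.card_coe] at h1
    have h2 : finrank ℝ ((↑W : Set (Fin n → Fin k)) → ℝ) = W.card := by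
      rw [Module.finrank_pi ℝ]; simp
    rw [← h1]; exact h2
  have hWsum : W.card = ∑ a ∈ behaviors W i, (edgeFinset W i a).card := by
    have h := Finset.card_eq_sum_card_fiberwise (f := deleteCoord i) (s := W)
      (t := behaviors W i)
      (fun x hx => by simp only [behaviors, Finset.mem_coe] at hx ⊢; convert Finset.mem_image_of_mem (deleteCoord i) hx)
    rw [h]
    refine Finset.sum_congr rfl fun a _ => ?_
    congr 1
    ext w
    simp [edgeFinset]
  have hsplit := Finset.card_filter_add_card_filter_not
    (s := B) (p := fun α => α i < ℓ)
  have hmin : ∑ a ∈ behaviors W i, ((edgeFinset W i a).card - ℓ)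
      + ∑ a ∈ behaviors W i, min ℓ (edgeFinset W i a).card
      = ∑ a ∈ behaviors W i, (edgeFinset W i a).card := by
    rw [← Finset.sum_add_distrib]
    refine Finset.sum_congr rfl fun a _ => ?_
    clear hsplit hWsum hBcard bb hspan hpart1 hind hBsupp hBdeg hW
    omega
  clear hind hBsupp hBdeg hW bb hspan
  generalize hS1 : ∑ a ∈ behaviors W i, ((edgeFinset W i a).card - ℓ) = S1 at hmin ⊢
  generalize hS2 : ∑ a ∈ behaviors W i, min ℓ (edgeFinset W i a).card = S2 at hmin hpart1
  generalize hS3 : ∑ a ∈ behaviors W i, (edgeFinset W i a).card = S3 at hmin hWsum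
  generalize hC1 : (B.filter fun α => α i < ℓ).card = C1 at hpart1 hsplit
  generalize hC2 : (B.filter fun α => ¬ α i < ℓ).card = C2 at hsplit ⊢
  clear hS1 hS2 hS3 hC1 hC2
  omega
end

section
/- Let k > ℓ ≥ 1 and m ≥ s ≥ 0 be integers, and consider the finite hypothesis class H = [k]^s × [ℓ]^{m−s} ⊆ [k]^m (all vectors whose first s coordinates take values in [k] and whose remaining m−s coordinates take values in [ℓ]). Then d^ℓ_DS(H) = s and dens^ℓ(H) = s(1 − ℓ/k). In particular, dens^ℓ(H) → d^ℓ_DS(H) as k → ∞, so the bound dens^ℓ(W) ≤ d^ℓ_DS(W) is tight including the constant. -/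
open scoped Classical

section Aux

/-- The hypothesis class `[k]^s × [ℓ]^{m-s}`. -/
private def Wcls (k ℓ m s : ℕ) : Finset (Fin m → Fin k) :=
  Finset.univ.filter fun w : Fin m → Fin k => ∀ i : Fin m, s ≤ (i : ℕ) → (w i : ℕ) < ℓ

private lemma mem_Wcls {k ℓ m s : ℕ} {w : Fin m → Fin k} :
    w ∈ Wcls k ℓ m s ↔ ∀ i : Fin m, s ≤ (i : ℕ) → (w i : ℕ) < ℓ := by
  simp [Wcls]

private lemma card_filter_val_lt (a b : ℕ) (hab : a ≤ b) :
    (Finset.univ.filter fun y : Fin b => (y : ℕ) < a).card = a := by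
  have h : (Finset.univ.filter fun y : Fin b => (y : ℕ) < a)
      = (Finset.univ : Finset (Fin a)).image (Fin.castLE hab) := by
    ext y
    simp only [Finset.mem_filter, Finset.mem_univ, true_and, Finset.mem_image]
    constructor
    · intro hy; exact ⟨⟨y, hy⟩, rfl⟩
    · rintro ⟨t, rfl⟩; exact t.2
  rw [h, Finset.card_image_of_injective _ (Fin.castLE_injective hab),
    Finset.card_univ, Fintype.card_fin]

private lemma edge_eq {k ℓ m s : ℕ} (i : Fin m) (w : Fin m → Fin k) (hw : w ∈ Wcls k ℓ m s) :
    edgeFinset (Wcls k ℓ m s) i (deleteCoord i w) =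
      (Finset.univ.filter fun y : Fin k => (i : ℕ) < s ∨ (y : ℕ) < ℓ).image
        (fun y => Function.update w i y) := by
  ext h
  simp only [edgeFinset, Finset.mem_filter, Finset.mem_image, Finset.mem_univ, true_and, mem_Wcls]
  constructor
  · rintro ⟨hhW, hdel⟩
    have hagree : ∀ j : Fin m, j ≠ i → h j = w j := fun j hj => congrFun hdel ⟨j, hj⟩
    refine ⟨h i, ?_, ?_⟩
    · by_cases his : (i : ℕ) < s
      · exact Or.inl his
      · exact Or.inr (hhW i (le_of_not_gt his))
    · funext j
      by_cases hj : j = i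
      · subst hj; simp
      · rw [Function.update_of_ne hj, hagree j hj]
  · rintro ⟨y, hy, rfl⟩
    refine ⟨?_, ?_⟩
    · intro j hj
      by_cases hji : j = i
      · subst hji
        rw [Function.update_self]
        rcases hy with h1 | h2
        · omega
        · exact h2
      · rw [Function.update_of_ne hji]; exact mem_Wcls.mp hw j hj
    · funext j
      show Function.update w i y j.1 = w j.1
      exact Function.update_of_ne j.2 _ _

private lemma edge_card {k ℓ m s : ℕ} (hℓk : ℓ ≤ k) (i : Fin m)
    (a : {j : Fin m // j ≠ i} → Fin k) (ha : a ∈ behaviors (Wcls k ℓ m s) i) :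
    (edgeFinset (Wcls k ℓ m s) i a).card = if (i : ℕ) < s then k else ℓ := by
  obtain ⟨w, hw, rfl⟩ : ∃ w, w ∈ Wcls k ℓ m s ∧ deleteCoord i w = a := by
    simpa [behaviors] using ha
  rw [edge_eq i w hw, Finset.card_image_of_injective _ (Function.update_injective w i)]
  by_cases his : (i : ℕ) < s
  · rw [if_pos his, Finset.filter_true_of_mem (fun y _ => Or.inl his),
      Finset.card_univ, Fintype.card_fin]
  · rw [if_neg his]
    have heq : (Finset.univ.filter fun y : Fin k => (i : ℕ) < s ∨ (y : ℕ) < ℓ)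
        = Finset.univ.filter fun y : Fin k => (y : ℕ) < ℓ := by
      apply Finset.filter_congr
      intro y _
      simp [his]
    rw [heq, card_filter_val_lt ℓ k hℓk]

private lemma Wcard_eq {k ℓ m s : ℕ} (i : Fin m) :
    (Wcls k ℓ m s).card
      = ∑ a ∈ behaviors (Wcls k ℓ m s) i, (edgeFinset (Wcls k ℓ m s) i a).card := by
  unfold behaviors edgeFinset
  exact @Finset.card_eq_sum_card_image _ _
    (@Fintype.decidablePiFintype _ _ (fun _ a b => Classical.propDecidable _) _)
    (deleteCoord i) (Wcls k ℓ m s)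

private lemma Wcls_nonempty {k ℓ m s : ℕ} (hℓ : 1 ≤ ℓ) (hℓk : ℓ < k) :
    (Wcls k ℓ m s).Nonempty := by
  have hk : 0 < k := by omega
  exact ⟨fun _ => ⟨0, hk⟩, mem_Wcls.mpr fun i _ => hℓ⟩

end Aux
private lemma dens_Wcls {k ℓ m s : ℕ} (hℓ : 1 ≤ ℓ) (hℓk : ℓ < k) (hsm : s ≤ m) :
    dens (Wcls k ℓ m s) ℓ = (s : ℝ) * (1 - (ℓ : ℝ) / (k : ℝ)) := by
  have hk : 0 < k := by omega
  have hWpos : 0 < (Wcls k ℓ m s).card := (Wcls_nonempty hℓ hℓk).card_pos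
  have hB : ∀ i : Fin m, (i : ℕ) < s →
      (Wcls k ℓ m s).card = (behaviors (Wcls k ℓ m s) i).card * k := by
    intro i his
    rw [Wcard_eq i,
      Finset.sum_congr rfl (fun a ha => by rw [edge_card hℓk.le i a ha, if_pos his]),
      Finset.sum_const, smul_eq_mul]
  have hinner : ∀ i : Fin m,
      (∑ a ∈ behaviors (Wcls k ℓ m s) i, ((edgeFinset (Wcls k ℓ m s) i a).card - ℓ))
        = if (i : ℕ) < s then (behaviors (Wcls k ℓ m s) i).card * (k - ℓ) else 0 := by
    intro i
    by_cases his : (i : ℕ) < s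
    · rw [if_pos his,
        Finset.sum_congr rfl (fun a ha => by rw [edge_card hℓk.le i a ha, if_pos his]),
        Finset.sum_const, smul_eq_mul]
    · rw [if_neg his]
      refine Finset.sum_eq_zero fun a ha => ?_
      rw [edge_card hℓk.le i a ha, if_neg his]
      omega
  have hnum : (∑ i : Fin m, ∑ a ∈ behaviors (Wcls k ℓ m s) i,
      ((edgeFinset (Wcls k ℓ m s) i a).card - ℓ)) * k = s * ((k - ℓ) * (Wcls k ℓ m s).card) := by
    rw [Finset.sum_mul]
    have : ∀ i : Fin m,
        (∑ a ∈ behaviors (Wcls k ℓ m s) i, ((edgeFinset (Wcls k ℓ m s) i a).card - ℓ)) * k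
          = if (i : ℕ) < s then (k - ℓ) * (Wcls k ℓ m s).card else 0 := by
      intro i
      rw [hinner i]
      by_cases his : (i : ℕ) < s
      · rw [if_pos his, if_pos his, hB i his]; ring
      · rw [if_neg his, if_neg his, Nat.zero_mul]
    rw [Finset.sum_congr rfl fun i _ => this i, ← Finset.sum_filter, Finset.sum_const,
      smul_eq_mul, card_filter_val_lt s m hsm]
  unfold dens
  have hk0 : (k : ℝ) ≠ 0 := Nat.cast_ne_zero.mpr hk.ne'
  have hW0 : ((Wcls k ℓ m s).card : ℝ) ≠ 0 := Nat.cast_ne_zero.mpr hWpos.ne'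
  have hcast : ((∑ i : Fin m, ∑ a ∈ behaviors (Wcls k ℓ m s) i,
      ((edgeFinset (Wcls k ℓ m s) i a).card - ℓ) : ℕ) : ℝ) * (k : ℝ)
        = (s : ℝ) * (((k : ℝ) - (ℓ : ℝ)) * ((Wcls k ℓ m s).card : ℝ)) := by
    have := congrArg (Nat.cast : ℕ → ℝ) hnum
    rw [Nat.cast_mul, Nat.cast_mul, Nat.cast_mul, Nat.cast_sub hℓk.le] at this
    exact this
  field_simp
  push_cast at hcast ⊢
  linear_combination hcast
private lemma ds_lower {k ℓ m s : ℕ} (hℓ : 1 ≤ ℓ) (hℓk : ℓ < k) (hsm : s ≤ m) :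
    ∃ S : Fin s → Fin m, DSShatters (↑(Wcls k ℓ m s) : Set (Fin m → Fin k)) ℓ S := by
  have hk : 0 < k := by omega
  refine ⟨fun i => ⟨(i : ℕ), lt_of_lt_of_le i.2 hsm⟩, ?_⟩
  unfold DSShatters DSShattered
  refine ⟨Finset.univ, ⟨fun _ => ⟨0, hk⟩, Finset.mem_univ _⟩, ?_, ?_⟩
  · intro f _
    unfold restrictClass
    refine ⟨fun j => if hj : (j : ℕ) < s then f ⟨(j : ℕ), hj⟩ else ⟨0, hk⟩, ?_, ?_⟩
    · refine Finset.mem_coe.mpr (mem_Wcls.mpr fun j hj => ?_)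
      rw [dif_neg (by omega)]
      exact hℓ
    · funext i
      simp only []
      rw [dif_pos i.2]
  · intro f _ i
    have hset : {g : Fin s → Fin k | g ∈ (Finset.univ : Finset (Fin s → Fin k)) ∧ IsNeighbor i f g}
        = ↑(Finset.univ.filter fun g => IsNeighbor i f g) := by
      ext g
      simp [Finset.mem_filter]
    rw [hset, Set.ncard_coe_finset]
    have hcard : (Finset.univ.filter fun g : Fin s → Fin k => IsNeighbor i f g).card
        = ((Finset.univ : Finset (Fin k)).erase (f i)).card := by
      apply Finset.card_bij (fun g _ => g i)
      · intro g hg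
        simp only [Finset.mem_filter] at hg
        exact Finset.mem_erase.mpr ⟨Ne.symm hg.2.1, Finset.mem_univ _⟩
      · intro g hg g' hg' h
        simp only [Finset.mem_filter] at hg hg'
        funext j
        by_cases hj : j = i
        · subst hj; exact h
        · rw [← hg.2.2 j hj, ← hg'.2.2 j hj]
      · intro y hy
        refine ⟨Function.update f i y, ?_, Function.update_self i y f⟩
        simp only [Finset.mem_filter]
        refine ⟨Finset.mem_univ _, ?_, fun j hj => (Function.update_of_ne hj y f).symm⟩
        rw [Function.update_self]
        exact Ne.symm (Finset.mem_erase.mp hy).1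
    rw [hcard, Finset.card_erase_of_mem (Finset.mem_univ _), Finset.card_univ, Fintype.card_fin]
    omega
private lemma ds_upper {k ℓ m s : ℕ} (hℓ : 1 ≤ ℓ) (hℓk : ℓ < k) (d' : ℕ)
    (hd : ∃ S : Fin d' → Fin m, DSShatters (↑(Wcls k ℓ m s) : Set (Fin m → Fin k)) ℓ S) :
    d' ≤ s := by
  obtain ⟨S, hS⟩ := hd
  unfold DSShatters DSShattered at hS
  obtain ⟨F, hFne, hFsub, hFnb⟩ := hS
  obtain ⟨f0, hf0⟩ := hFne
  -- every element of F comes from some h in the class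
  have hval : ∀ f ∈ F, ∃ h : Fin m → Fin k,
      (∀ j : Fin m, s ≤ (j : ℕ) → ((h j) : ℕ) < ℓ) ∧ ∀ i : Fin d', f i = h (S i) := by
    intro f hf
    have := hFsub hf
    unfold restrictClass at this
    obtain ⟨h, hh, hfh⟩ := this
    exact ⟨h, mem_Wcls.mp (Finset.mem_coe.mp hh), fun i => by rw [← hfh]⟩
  -- nonempty neighbor sets
  have hnb : ∀ f ∈ F, ∀ i : Fin d', ∃ g, g ∈ F ∧ IsNeighbor i f g := by
    intro f hf i
    have h1 := hFnb f hf i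
    have h2 : {g : Fin d' → Fin k | g ∈ F ∧ IsNeighbor i f g}.Nonempty := by
      apply Set.nonempty_of_ncard_ne_zero
      omega
    exact h2
  -- (b) every S i has index < s
  have hb : ∀ i : Fin d', (S i : ℕ) < s := by
    intro i
    by_contra hs
    push_neg at hs
    set N : Finset (Fin d' → Fin k) := F.filter (fun g => IsNeighbor i f0 g) with hN
    have hNcard : ℓ ≤ N.card := by
      have h1 := hFnb f0 hf0 i
      have hset : {g : Fin d' → Fin k | g ∈ F ∧ IsNeighbor i f0 g} = ↑N := by
        ext g; simp [hN, Finset.mem_filter]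
      rwa [hset, Set.ncard_coe_finset] at h1
    have hf0N : f0 ∉ N := by
      intro hmem
      exact ((Finset.mem_filter.mp hmem).2).1 rfl
    have hcard' : ℓ + 1 ≤ (insert f0 N).card := by
      rw [Finset.card_insert_of_notMem hf0N]
      omega
    -- elements of insert f0 N agree with f0 off i, and all lie in F
    have hmemF : ∀ g ∈ insert f0 N, g ∈ F := by
      intro g hg
      rcases Finset.mem_insert.mp hg with rfl | hg'
      · exact hf0
      · exact (Finset.mem_filter.mp hg').1
    have hoff : ∀ g ∈ insert f0 N, ∀ j : Fin d', j ≠ i → g j = f0 j := by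
      intro g hg j hj
      rcases Finset.mem_insert.mp hg with rfl | hg'
      · rfl
      · exact ((Finset.mem_filter.mp hg').2.2 j hj).symm
    have hle : (insert f0 N).card ≤ (Finset.univ.filter fun y : Fin k => (y : ℕ) < ℓ).card := by
      apply Finset.card_le_card_of_injOn (fun g => g i)
      · intro g hg
        simp only [Finset.mem_filter, Finset.mem_univ, true_and]
        obtain ⟨h, hh, hgh⟩ := hval g (hmemF g hg)
        rw [hgh i]
        simpa using hh (S i) hs
      · intro g hg g' hg' hgg'
        funext j
        by_cases hj : j = i
        · subst hj; exact hgg'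
        · rw [hoff g hg j hj, hoff g' hg' j hj]
    rw [card_filter_val_lt ℓ k (by omega)] at hle
    omega
  -- (a) S is injective
  have hinj : Function.Injective S := by
    intro i1 i2 h12
    by_contra hne
    obtain ⟨g, hgF, hgnb⟩ := hnb f0 hf0 i1
    obtain ⟨h, hh, hfh⟩ := hval f0 hf0
    obtain ⟨h', hh', hgh⟩ := hval g hgF
    have e1 : f0 i1 = f0 i2 := by rw [hfh i1, hfh i2, h12]
    have e2 : g i1 = g i2 := by rw [hgh i1, hgh i2, h12]
    have e3 : g i2 = f0 i2 := (hgnb.2 i2 (fun h => hne h.symm)).symm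
    exact hgnb.1 (by rw [e1, ← e3, ← e2])
  -- conclude
  have hinj2 : Function.Injective (fun i : Fin d' => (⟨(S i : ℕ), hb i⟩ : Fin s)) := by
    intro i1 i2 h
    have h' : (S i1 : ℕ) = (S i2 : ℕ) := by simpa [Fin.ext_iff] using h
    exact hinj (Fin.ext h')
  simpa using Fintype.card_le_of_injective _ hinj2
/-- Optimality of the constant. For `k > ℓ ≥ 1` and `m ≥ s ≥ 0`, the
class `H = [k]^s × [ℓ]^{m−s} ⊆ [k]^m` satisfies `d^ℓ_DS(H) = s` and
`dens^ℓ(H) = s(1 − ℓ/k)`; hence the bound `dens^ℓ(W) ≤ d^ℓ_DS(W)` is tight including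
the constant as `k → ∞`. -/
theorem dens_DSdim_tight (k ℓ m s : ℕ) (hℓ : 1 ≤ ℓ) (hℓk : ℓ < k) (hsm : s ≤ m) :
    DSDimEq (↑(Finset.univ.filter fun w : Fin m → Fin k =>
        ∀ i : Fin m, s ≤ (i : ℕ) → (w i : ℕ) < ℓ) : Set (Fin m → Fin k)) ℓ s ∧
    dens (Finset.univ.filter fun w : Fin m → Fin k =>
        ∀ i : Fin m, s ≤ (i : ℕ) → (w i : ℕ) < ℓ) ℓ = (s : ℝ) * (1 - (ℓ : ℝ) / (k : ℝ)) := by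
  exact ⟨⟨ds_lower hℓ hℓk hsm, fun d' hd' => ds_upper hℓ hℓk d' hd'⟩, dens_Wcls hℓ hℓk hsm⟩
end
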